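/- In the ℚ(q)-algebra with generators θ_i, θ_j and relation (q+q⁻¹)θ_iθ_jθ_i = θ_i²θ_j + θ_jθ_i², the divided powers θ_i^{(a)} = θ_i^a/[a]! satisfy θ_i^{(a)} θ_j^{(a+c)} θ_i^{(c)} = θ_j^{(c)} θ_i^{(a+c)} θ_j^{(a)} for all natural numbers a, c, where the same relation with i and j exchanged also holds. -/
import Mathlib


noncomputable section

/-- The field ℚ(q). -/
abbrev Qq : Type := RatFunc ℚ

/-- The variable q of ℚ(q). -/
def qv : Qq := RatFunc.X

/-- The quantum integer [n] = (qⁿ − q⁻ⁿ)/(q − q⁻¹). -/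
def qint (n : ℕ) : Qq := (qv ^ n - qv⁻¹ ^ n) / (qv - qv⁻¹)

/-- The quantum factorial [n]! = [n][n−1]⋯[1]. -/
def qfac : ℕ → Qq
  | 0 => 1
  | n + 1 => qint (n + 1) * qfac n

/-- Generators θ_i (= true) and θ_j (= false) of the free algebra. -/
def θfree (b : Bool) : FreeAlgebra Qq Bool := FreeAlgebra.ι Qq b

/-- The two quantum Serre relations of the negative half of quantum 𝔰𝔩₃:
(q+q⁻¹)θ_iθ_jθ_i = θ_i²θ_j + θ_jθ_i², and the same with i and j exchanged. -/
inductive SerreRel : FreeAlgebra Qq Bool → FreeAlgebra Qq Bool → Prop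
  | serre (b : Bool) :
      SerreRel ((qv + qv⁻¹) • (θfree b * θfree (!b) * θfree b))
        (θfree b * θfree b * θfree (!b) + θfree (!b) * θfree b * θfree b)

/-- The negative half U⁻ of quantum 𝔰𝔩₃ over ℚ(q). -/
abbrev Uminus : Type := RingQuot SerreRel

/-- The generators θ_i, θ_j of U⁻. -/
def θ (b : Bool) : Uminus := RingQuot.mkAlgHom Qq SerreRel (θfree b)

/-- Divided power θ^{(a)} = θ^a / [a]!. -/
def dp (x : Uminus) (a : ℕ) : Uminus := (qfac a)⁻¹ • x ^ a

/-- in U⁻ (quantum 𝔰𝔩₃ negative half), the divided powers satisfy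
θ_i^{(a)} θ_j^{(a+c)} θ_i^{(c)} = θ_j^{(c)} θ_i^{(a+c)} θ_j^{(a)} for all a, c,
and the same relation with i and j exchanged. -/
lemma qv_ne : qv ≠ 0 := RatFunc.X_ne_zero
lemma qvi_ne : qv⁻¹ ≠ 0 := inv_ne_zero qv_ne

lemma qd_ne : qv - qv⁻¹ ≠ 0 := by
  intro h
  have h1 : qv * qv = 1 := by
    have := sub_eq_zero.mp h
    field_simp [qv_ne] at this
    linear_combination this
  have h2 : (Polynomial.X * Polynomial.X : Polynomial ℚ) = 1 := by
    apply IsFractionRing.injective (Polynomial ℚ) (RatFunc ℚ)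
    rw [map_mul, map_one, RatFunc.algebraMap_X]
    exact h1
  have := congrArg (Polynomial.coeff · 2) h2
  simp [Polynomial.coeff_one] at this

lemma qint_mul (n : ℕ) : qint n * (qv - qv⁻¹) = qv ^ n - qv⁻¹ ^ n :=
  div_mul_cancel₀ _ qd_ne
lemma qint_zero : qint 0 = 0 := by simp [qint]
lemma qintA (s : ℕ) : qint (s+1) = qv * qint s + qv⁻¹ ^ s := by
  apply mul_right_cancel₀ qd_ne
  rw [add_mul, qint_mul, mul_assoc, qint_mul]; ring
lemma qintB (s : ℕ) : qint (s+1) = qv⁻¹ * qint s + qv ^ s := by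
  apply mul_right_cancel₀ qd_ne
  rw [add_mul, qint_mul, mul_assoc, qint_mul]; ring
lemma q_center : qv * (qv + qv⁻¹) = qv * qv + 1 := by
  rw [mul_add, mul_inv_cancel₀ qv_ne]

/-- coefficients of the PBW-type expansion -/
def co : ℕ → ℕ → ℕ → Qq
  | 0, _, 0 => 1
  | 0, _, _+1 => 0
  | n+1, m, 0 => qv ^ m * co n m 0
  | n+1, m, t+1 => qv ^ (m - (t+1)) * qv⁻¹ ^ (t+1) * co n m (t+1) + qint (m - t) * co n m t

lemma co_big : ∀ n m t, n < t → co n m t = 0 := by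
  intro n
  induction n with
  | zero => intro m t h; match t, h with | t+1, _ => rfl
  | succ n ih =>
    intro m t h
    match t, h with
    | t+1, h =>
      rw [co, ih m (t+1) (by omega), ih m t (by omega), mul_zero, mul_zero, add_zero]

lemma co_wide : ∀ n m t, m < t → co n m t = 0 := by
  intro n
  induction n with
  | zero => intro m t h; match t, h with | t+1, _ => rfl
  | succ n ih =>
    intro m t h
    match t, h with
    | t+1, h =>
      rw [co, ih m (t+1) (by omega), mul_zero,
        show m - t = 0 by omega, qint_zero, zero_mul, add_zero]

section Generic
variable {A : Type*} [Ring A] [Algebra Qq A]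

def kk (x y : A) : A := y * x - qv • (x * y)

variable {x y : A}

lemma yx_eq : y * x = qv • (x * y) + kk x y := by rw [kk]; abel

lemma xk (hx : (qv + qv⁻¹) • (x*y*x) = x*x*y + y*x*x) :
    x * kk x y = qv • (kk x y * x) := by
  have key : (qv*qv) • (x*y*x) + x*y*x = qv • (x*x*y) + qv • (y*x*x) := by
    rw [show (qv*qv) • (x*y*x) + x*y*x = (qv*(qv+qv⁻¹)) • (x*y*x) by
      rw [q_center, add_smul, one_smul], mul_smul, hx, smul_add]
  have hyxx : qv • (y*x*x) = (qv*qv) • (x*y*x) + x*y*x - qv • (x*x*y) := by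
    rw [key]; abel
  simp only [kk, mul_sub, sub_mul, mul_smul_comm, smul_mul_assoc, smul_smul, smul_sub,
    ← mul_assoc]
  rw [hyxx]
  abel

lemma ky (hy : (qv + qv⁻¹) • (y*x*y) = y*y*x + x*y*y) :
    kk x y * y = qv • (y * kk x y) := by
  have key : (qv*qv) • (y*x*y) + y*x*y = qv • (y*y*x) + qv • (x*y*y) := by
    rw [show (qv*qv) • (y*x*y) + y*x*y = (qv*(qv+qv⁻¹)) • (y*x*y) by
      rw [q_center, add_smul, one_smul], mul_smul, hy, smul_add]
  have h2 : qv • (y*y*x) = (qv*qv) • (y*x*y) + y*x*y - qv • (x*y*y) := by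
    rw [key]; abel
  simp only [kk, mul_sub, sub_mul, mul_smul_comm, smul_mul_assoc, smul_smul, smul_sub,
    ← mul_assoc]
  rw [h2]
  abel

-- inverted forms
lemma kx (hx : (qv + qv⁻¹) • (x*y*x) = x*x*y + y*x*x) :
    kk x y * x = qv⁻¹ • (x * kk x y) := by
  rw [xk hx, smul_smul, inv_mul_cancel₀ qv_ne, one_smul]

lemma yk (hy : (qv + qv⁻¹) • (y*x*y) = y*y*x + x*y*y) :
    y * kk x y = qv⁻¹ • (kk x y * y) := by
  rw [ky hy, smul_smul, inv_mul_cancel₀ qv_ne, one_smul]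

lemma kx_pow (hx : (qv + qv⁻¹) • (x*y*x) = x*x*y + y*x*x) (t : ℕ) :
    kk x y ^ t * x = (qv⁻¹ ^ t) • (x * kk x y ^ t) := by
  induction t with
  | zero => simp
  | succ t ih =>
    rw [pow_succ, mul_assoc, kx hx, mul_smul_comm, ← mul_assoc, ih,
      smul_mul_assoc, smul_smul, ← pow_succ', mul_assoc]

lemma yk_pow (hy : (qv + qv⁻¹) • (y*x*y) = y*y*x + x*y*y) (t : ℕ) :
    y * kk x y ^ t = (qv⁻¹ ^ t) • (kk x y ^ t * y) := by
  induction t with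
  | zero => simp
  | succ t ih =>
    rw [pow_succ, ← mul_assoc, ih, smul_mul_assoc, mul_assoc, yk hy, mul_smul_comm,
      smul_smul, ← mul_assoc, ← pow_succ]

lemma k_xpow (hx : (qv + qv⁻¹) • (x*y*x) = x*x*y + y*x*x) (s : ℕ) :
    kk x y * x ^ s = (qv⁻¹ ^ s) • (x ^ s * kk x y) := by
  induction s with
  | zero => simp
  | succ s ih =>
    rw [pow_succ', ← mul_assoc, kx hx, smul_mul_assoc, mul_assoc, ih, mul_smul_comm,
      smul_smul, ← mul_assoc, ← pow_succ', ← pow_succ']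

-- commutation of y past powers of x
lemma comm1 (hx : (qv + qv⁻¹) • (x*y*x) = x*x*y + y*x*x) (s : ℕ) :
    y * x ^ s = (qv ^ s) • (x ^ s * y) + qint s • (x ^ (s-1) * kk x y) := by
  induction s with
  | zero => simp [qint_zero]
  | succ s ih =>
    rw [pow_succ', ← mul_assoc, show y * x = qv • (x*y) + kk x y from yx_eq, add_mul,
      smul_mul_assoc, mul_assoc, ih]
    rw [mul_add, mul_smul_comm, mul_smul_comm, smul_add, smul_smul, smul_smul,
      ← mul_assoc, ← pow_succ', k_xpow hx]
    have hx2 : (qv * qint s) • (x * (x^(s-1) * kk x y)) = (qv * qint s) • (x^s * kk x y) := by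
      cases s with
      | zero => simp [qint_zero]
      | succ s => simp only [Nat.add_sub_cancel]; rw [← mul_assoc, ← pow_succ']
    rw [hx2, Nat.add_sub_cancel, qintA, add_smul]
    abel

lemma comm2 (hy : (qv + qv⁻¹) • (y*x*y) = y*y*x + x*y*y) (s : ℕ) :
    y ^ s * x = (qv ^ s) • (x * y ^ s) + qint s • (kk x y * y ^ (s-1)) := by
  induction s with
  | zero => simp [qint_zero]
  | succ s ih =>
    rw [pow_succ', mul_assoc, ih, mul_add, mul_smul_comm, mul_smul_comm,
      ← mul_assoc, show y * x = qv • (x*y) + kk x y from yx_eq, add_mul, smul_mul_assoc,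
      mul_assoc, smul_add, smul_smul]
    have hy2 : qint s • (y * (kk x y * y^(s-1))) = (qv⁻¹ * qint s) • (kk x y * y^s) := by
      cases s with
      | zero => simp [qint_zero]
      | succ s => rw [Nat.add_sub_cancel, ← mul_assoc, yk hy, smul_mul_assoc, mul_assoc,
          ← pow_succ', smul_smul, mul_comm (qint (s+1))]
    rw [hy2, Nat.add_sub_cancel, mul_comm (qv ^ s) qv, ← pow_succ', qintB, add_smul]
    abel

lemma step1 (hx : (qv + qv⁻¹) • (x*y*x) = x*x*y + y*x*x)
    (hy : (qv + qv⁻¹) • (y*x*y) = y*y*x + x*y*y) (p t r : ℕ) :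
    y * (x^p * (kk x y ^ t * y^r))
      = (qv^p * qv⁻¹^t) • (x^p * (kk x y ^ t * y^(r+1)))
        + qint p • (x^(p-1) * (kk x y ^ (t+1) * y^r)) := by
  rw [← mul_assoc, comm1 hx p, add_mul, smul_mul_assoc, smul_mul_assoc,
    mul_assoc (x^p), mul_assoc (x^(p-1))]
  rw [← mul_assoc y, yk_pow hy t, smul_mul_assoc, mul_assoc (kk x y ^ t), ← pow_succ',
    mul_smul_comm, smul_smul]
  rw [← mul_assoc (kk x y), ← pow_succ']

lemma step1' (hx : (qv + qv⁻¹) • (x*y*x) = x*x*y + y*x*x)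
    (hy : (qv + qv⁻¹) • (y*x*y) = y*y*x + x*y*y) (p t r : ℕ) :
    (x^p * (kk x y ^ t * y^r)) * x
      = (qv⁻¹^t * qv^r) • (x^(p+1) * (kk x y ^ t * y^r))
        + qint r • (x^p * (kk x y ^ (t+1) * y^(r-1))) := by
  rw [mul_assoc, mul_assoc, comm2 hy r, mul_add, mul_add, mul_smul_comm, mul_smul_comm,
    ← mul_assoc (kk x y ^ t), kx_pow hx t, smul_mul_assoc, mul_assoc x, mul_smul_comm,
    ← mul_assoc (x^p) x, ← pow_succ, smul_smul, mul_smul_comm,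
    ← mul_assoc (kk x y ^ t) (kk x y), ← pow_succ, mul_smul_comm, mul_comm (qv ^ r)]

lemma L1 (hx : (qv + qv⁻¹) • (x*y*x) = x*x*y + y*x*x)
    (hy : (qv + qv⁻¹) • (y*x*y) = y*y*x + x*y*y) (n m : ℕ) :
    y ^ n * x ^ m
      = ∑ t ∈ Finset.range (n+1), co n m t • (x^(m-t) * (kk x y ^ t * y^(n-t))) := by
  induction n with
  | zero => simp [co]
  | succ n ih =>
    have expand : y^(n+1) * x^m = ∑ t ∈ Finset.range (n+1),
        ((co n m t * (qv^(m-t) * qv⁻¹^t)) • (x^(m-t) * (kk x y ^ t * y^(n+1-t)))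
          + (co n m t * qint (m-t)) • (x^(m-(t+1)) * (kk x y ^ (t+1) * y^(n+1-(t+1))))) := by
      rw [pow_succ', mul_assoc, ih, Finset.mul_sum]
      refine Finset.sum_congr rfl fun t ht => ?_
      rw [Finset.mem_range] at ht
      rw [mul_smul_comm, step1 hx hy (m-t) t (n-t), smul_add, smul_smul, smul_smul,
        show n-t+1 = n+1-t by omega, show m-t-1 = m-(t+1) by omega,
        show n-t = n+1-(t+1) by omega]
    rw [expand, Finset.sum_add_distrib]
    have first : ∑ t ∈ Finset.range (n+2),
        (co n m t * (qv^(m-t) * qv⁻¹^t)) • (x^(m-t) * (kk x y ^ t * y^(n+1-t)))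
        = ∑ t ∈ Finset.range (n+1),
        (co n m t * (qv^(m-t) * qv⁻¹^t)) • (x^(m-t) * (kk x y ^ t * y^(n+1-t))) := by
      rw [Finset.sum_range_succ, co_big n m (n+1) (by omega), zero_mul, zero_smul, add_zero]
    have second : ∑ t ∈ Finset.range (n+1),
        (co n m t * qint (m-t)) • (x^(m-(t+1)) * (kk x y ^ (t+1) * y^(n+1-(t+1))))
        = ∑ t ∈ Finset.range (n+2),
        (if t = 0 then (0:Qq) else co n m (t-1) * qint (m-(t-1)))
          • (x^(m-t) * (kk x y ^ t * y^(n+1-t))) := by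
      rw [Finset.sum_range_succ' (fun t => (if t = 0 then (0:Qq) else co n m (t-1) * qint (m-(t-1)))
          • (x^(m-t) * (kk x y ^ t * y^(n+1-t)))) (n+1)]
      simp
    rw [← first, second, ← Finset.sum_add_distrib]
    refine Finset.sum_congr rfl fun t ht => ?_
    rw [← add_smul]
    congr 1
    match t with
    | 0 =>
      rw [if_pos rfl, add_zero, co]
      simp only [Nat.sub_zero, pow_zero, mul_one]
      ring
    | s+1 =>
      simp only [Nat.add_sub_cancel, if_neg (Nat.succ_ne_zero s)]
      rw [co]
      ring

lemma L1' (hx : (qv + qv⁻¹) • (x*y*x) = x*x*y + y*x*x)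
    (hy : (qv + qv⁻¹) • (y*x*y) = y*y*x + x*y*y) (n m : ℕ) :
    y ^ m * x ^ n
      = ∑ t ∈ Finset.range (n+1), co n m t • (x^(n-t) * (kk x y ^ t * y^(m-t))) := by
  induction n with
  | zero => simp [co]
  | succ n ih =>
    have expand : y^m * x^(n+1) = ∑ t ∈ Finset.range (n+1),
        ((co n m t * (qv^(m-t) * qv⁻¹^t)) • (x^(n+1-t) * (kk x y ^ t * y^(m-t)))
          + (co n m t * qint (m-t)) • (x^(n+1-(t+1)) * (kk x y ^ (t+1) * y^(m-(t+1))))) := by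
      rw [pow_succ, ← mul_assoc, ih, Finset.sum_mul]
      refine Finset.sum_congr rfl fun t ht => ?_
      rw [Finset.mem_range] at ht
      rw [smul_mul_assoc, step1' hx hy (n-t) t (m-t), smul_add, smul_smul, smul_smul,
        show n-t+1 = n+1-t by omega, show m-t-1 = m-(t+1) by omega,
        show n-t = n+1-(t+1) by omega, mul_comm (qv⁻¹^t) (qv^(m-t))]
    rw [expand, Finset.sum_add_distrib]
    have first : ∑ t ∈ Finset.range (n+2),
        (co n m t * (qv^(m-t) * qv⁻¹^t)) • (x^(n+1-t) * (kk x y ^ t * y^(m-t)))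
        = ∑ t ∈ Finset.range (n+1),
        (co n m t * (qv^(m-t) * qv⁻¹^t)) • (x^(n+1-t) * (kk x y ^ t * y^(m-t))) := by
      rw [Finset.sum_range_succ, co_big n m (n+1) (by omega), zero_mul, zero_smul, add_zero]
    have second : ∑ t ∈ Finset.range (n+1),
        (co n m t * qint (m-t)) • (x^(n+1-(t+1)) * (kk x y ^ (t+1) * y^(m-(t+1))))
        = ∑ t ∈ Finset.range (n+2),
        (if t = 0 then (0:Qq) else co n m (t-1) * qint (m-(t-1)))
          • (x^(n+1-t) * (kk x y ^ t * y^(m-t))) := by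
      rw [Finset.sum_range_succ' (fun t => (if t = 0 then (0:Qq) else co n m (t-1) * qint (m-(t-1)))
          • (x^(n+1-t) * (kk x y ^ t * y^(m-t)))) (n+1)]
      simp
    rw [← first, second, ← Finset.sum_add_distrib]
    refine Finset.sum_congr rfl fun t ht => ?_
    rw [← add_smul]
    congr 1
    match t with
    | 0 =>
      rw [if_pos rfl, add_zero, co]
      simp only [Nat.sub_zero, pow_zero, mul_one]
      ring
    | s+1 =>
      simp only [Nat.add_sub_cancel, if_neg (Nat.succ_ne_zero s)]
      rw [co]
      ring

lemma main_id (hx : (qv + qv⁻¹) • (x*y*x) = x*x*y + y*x*x)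
    (hy : (qv + qv⁻¹) • (y*x*y) = y*y*x + x*y*y) (a c : ℕ) :
    x^a * (y^(a+c) * x^c) = (y^c * x^(a+c)) * y^a := by
  rw [L1 hx hy (a+c) c, L1' hx hy (a+c) c, Finset.mul_sum, Finset.sum_mul]
  refine Finset.sum_congr rfl fun t ht => ?_
  by_cases hto : t ≤ c
  · rw [mul_smul_comm, smul_mul_assoc]
    congr 1
    rw [← mul_assoc (x^a), ← pow_add, show a+(c-t) = a+c-t by omega,
      mul_assoc (x^(a+c-t)), mul_assoc (kk x y ^ t), ← pow_add,
      show c-t+a = a+c-t by omega, ← mul_assoc (x^(a+c-t))]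
  · rw [co_wide (a+c) c t (by omega), zero_smul, zero_smul, mul_zero, zero_mul]

end Generic

lemma serreU (b : Bool) :
    (qv + qv⁻¹) • (θ b * θ (!b) * θ b) = θ b * θ b * θ (!b) + θ (!b) * θ b * θ b := by
  have h := RingQuot.mkAlgHom_rel Qq (SerreRel.serre b)
  simpa only [map_smul, map_mul, map_add, θ] using h

lemma dp_mul (u v w : Uminus) (a b c : ℕ) :
    dp u a * dp v b * dp w c
      = ((qfac a)⁻¹ * (qfac b)⁻¹ * (qfac c)⁻¹) • (u^a * (v^b * w^c)) := by
  simp only [dp, smul_mul_assoc, mul_smul_comm, smul_smul, mul_assoc]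
  congr 1
  ring

theorem tight_monomial_identity (a c : ℕ) :
    dp (θ true) a * dp (θ false) (a + c) * dp (θ true) c
      = dp (θ false) c * dp (θ true) (a + c) * dp (θ false) a ∧
    dp (θ false) a * dp (θ true) (a + c) * dp (θ false) c
      = dp (θ true) c * dp (θ false) (a + c) * dp (θ true) a := by
  have hT := serreU true
  have hF := serreU false
  simp only [Bool.not_true, Bool.not_false] at hT hF
  constructor
  · rw [dp_mul, dp_mul, main_id hT hF a c, mul_comm ((qfac a)⁻¹), ← mul_assoc]
    rw [mul_assoc (θ false ^ c)]
    congr 1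
    ring
  · rw [dp_mul, dp_mul, main_id hF hT a c, mul_comm ((qfac a)⁻¹), ← mul_assoc]
    rw [mul_assoc (θ true ^ c)]
    congr 1
    ring

end
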